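/- Fix m and k with 2k ≤ m, and let g : {0,…,k} → ℕ be a counting function with g(0) = 0 defining a top-k-counting committee scoring rule R. If there exist nonnegative integers k₁, k₂ with k₁ + k₂ ≤ k such that g(k) − g(k−k₂) < g(k₁+k₂) − g(k₁), then R fails the fixed-majority criterion: there exists an election with m candidates in which strictly more than half of the voters rank all members of some size-k committee M in their top k positions, yet some other size-k committee has score at least as high as M. -/

import Mathlib

/-- Cardinality of a filtered `Fin m` universe equals the cardinality of the
corresponding filtered range of naturals. -/
lemma fm_card_filter_fin (m : ℕ) (p : ℕ → Prop) [DecidablePred p] :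
    (Finset.univ.filter (fun c : Fin m => p c.val)).card
      = ((Finset.Iio m).filter p).card := by
  rw [← Fin.map_valEmbedding_univ, Finset.filter_map, Finset.card_map]
  rfl

lemma fm_countP_replicate {α : Type*} (n : ℕ) (x : α) (p : α → Bool) :
    (List.replicate n x).countP p = if p x then n else 0 := by
  induction n with
  | zero => simp
  | succ n ih => simp [List.replicate_succ, List.countP_cons, ih]; split_ifs <;> simp

/-- The rank-swapping involution used for the "minority" voter. -/
def fm_f (k k₁ x : ℕ) : ℕ :=
  if x < k₁ then x else if x < k then x + (k - k₁)
  else if x < 2 * k - k₁ then x - (k - k₁) else x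

lemma fm_f_invol (k k₁ : ℕ) (hk : k₁ ≤ k) (x : ℕ) : fm_f k k₁ (fm_f k k₁ x) = x := by
  unfold fm_f; split_ifs <;> omega

lemma fm_f_lt (k k₁ m : ℕ) (hk : k₁ ≤ k) (hm : 2 * k ≤ m) (x : ℕ) (hx : x < m) :
    fm_f k k₁ x < m := by
  unfold fm_f; split_ifs <;> omega

/-- necessity direction of the characterization. If the counting
function `g` violates the relaxed-convexity condition, then the corresponding
top-k-counting rule fails the fixed-majority criterion: there is an election
in which a strict majority ranks all members of `M` in their top `k`
positions, yet some other committee scores at least as high. -/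
theorem condition_violation_implies_fixed_majority_failure (m k : ℕ)
    (hmk : 2 * k ≤ m) (g : ℕ → ℕ) (hg0 : g 0 = 0)
    (hviol : ∃ k₁ k₂ : ℕ, k₁ + k₂ ≤ k ∧ g k - g (k - k₂) < g (k₁ + k₂) - g k₁) :
    ∃ (V : List (Fin m ≃ Fin m)) (M S : Finset (Fin m)),
      M.card = k ∧ S.card = k ∧ S ≠ M ∧
      V.length < 2 * V.countP (fun v =>
        decide (M ⊆ Finset.univ.filter (fun c => ((v c : ℕ) < k)))) ∧
      (V.map (fun v =>
        g ((M ∩ Finset.univ.filter (fun c => ((v c : ℕ) < k))).card))).sum ≤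
      (V.map (fun v =>
        g ((S ∩ Finset.univ.filter (fun c => ((v c : ℕ) < k))).card))).sum := by
  obtain ⟨k₁, k₂, hk12, hlt⟩ := hviol
  -- k₂ must be positive
  rcases Nat.eq_zero_or_pos k₂ with hk2 | hk2
  · simp [hk2] at hlt
  have hk1k : k₁ + 1 ≤ k := by omega
  have hk1 : k₁ ≤ k := by omega
  -- the minority voter, an involution on Fin m
  set vB : Fin m ≃ Fin m :=
    (Function.Involutive.toPerm
      (fun x : Fin m => ⟨fm_f k k₁ x.val, fm_f_lt k k₁ m hk1 hmk x.val x.isLt⟩)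
      (fun x => by ext; exact fm_f_invol k k₁ hk1 x.val)) with hvB
  have hvB_apply : ∀ x : Fin m, ((vB x : Fin m) : ℕ) = fm_f k k₁ x.val := fun x => rfl
  set d1 : ℕ := g k - g (k - k₂) with hd1
  refine ⟨List.replicate (d1 + 1) (Equiv.refl (Fin m)) ++ List.replicate d1 vB,
    Finset.univ.filter (fun c : Fin m => (c : ℕ) < k),
    Finset.univ.filter (fun c : Fin m => (c : ℕ) < k - k₂ ∨ (k ≤ (c : ℕ) ∧ (c : ℕ) < k + k₂)),
    ?_, ?_, ?_, ?_, ?_⟩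
  · refine (fm_card_filter_fin m (fun x => x < k)).trans ?_
    rw [show (Finset.Iio m).filter (fun x => x < k) = Finset.Iio k by
      ext x; simp only [Finset.mem_filter, Finset.mem_Iio]; omega, Nat.card_Iio]
  · refine (fm_card_filter_fin m (fun x => x < k - k₂ ∨ (k ≤ x ∧ x < k + k₂))).trans ?_
    rw [show (Finset.Iio m).filter (fun x => x < k - k₂ ∨ (k ≤ x ∧ x < k + k₂))
        = Finset.Iio (k - k₂) ∪ Finset.Ico k (k + k₂) by
      ext x; simp only [Finset.mem_filter, Finset.mem_Iio, Finset.mem_union,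
        Finset.mem_Ico]; omega]
    rw [Finset.card_union_of_disjoint, Nat.card_Iio, Nat.card_Ico]
    · omega
    · simp only [Finset.disjoint_left, Finset.mem_Iio, Finset.mem_Ico]
      intro x hx; omega
  · -- S ≠ M : candidate k belongs to S but not to M
    intro h
    have hkm : k < m := by omega
    have := Finset.ext_iff.mp h ⟨k, hkm⟩
    simp only [Finset.mem_filter, Finset.mem_univ, true_and] at this
    omega
  · -- majority condition
    rw [List.countP_append, List.length_append, List.length_replicate,
      List.length_replicate, fm_countP_replicate, fm_countP_replicate]
    have h1 : (decide ((Finset.univ.filter (fun c : Fin m => (c : ℕ) < k)) ⊆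
        Finset.univ.filter (fun c : Fin m => (((Equiv.refl (Fin m)) c : ℕ) < k))) = true) := by
      simp [Finset.subset_iff]; exact fun x hx => Finset.mem_filter.mpr ⟨Finset.mem_univ _, hx⟩
    have h2 : (decide ((Finset.univ.filter (fun c : Fin m => (c : ℕ) < k)) ⊆
        Finset.univ.filter (fun c : Fin m => (((vB) c : ℕ) < k))) = false) := by
      simp only [decide_eq_false_iff_not, Finset.subset_iff]
      intro h
      have hk1m : k₁ < m := by omega
      have hmem : (⟨k₁, hk1m⟩ : Fin m) ∈
          Finset.univ.filter (fun c : Fin m => (c : ℕ) < k) := by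
        simp only [Finset.mem_filter, Finset.mem_univ, true_and]; exact hk1k
      have := h hmem
      simp only [Finset.mem_filter, Finset.mem_univ, true_and, hvB_apply] at this
      have h3 : fm_f k k₁ k₁ < k := this
      unfold fm_f at h3
      split_ifs at h3 <;> omega
    rw [h1, h2]
    simp only [if_true, if_false]
    omega
  · -- score comparison
    rw [List.map_append, List.map_append, List.sum_append, List.sum_append,
      List.map_replicate, List.map_replicate, List.map_replicate, List.map_replicate,
      List.sum_replicate, List.sum_replicate, List.sum_replicate, List.sum_replicate,
      smul_eq_mul, smul_eq_mul, smul_eq_mul, smul_eq_mul]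
    -- compute the four intersection cardinalities
    have cMA : ((Finset.univ.filter (fun c : Fin m => (c : ℕ) < k)) ∩
        Finset.univ.filter (fun c : Fin m => (((Equiv.refl (Fin m)) c : ℕ) < k))).card = k := by
      rw [show (Finset.univ.filter (fun c : Fin m => (c : ℕ) < k)) ∩
          Finset.univ.filter (fun c : Fin m => (((Equiv.refl (Fin m)) c : ℕ) < k))
          = Finset.univ.filter (fun c : Fin m => (c : ℕ) < k) by
        ext x; simp; exact fun hx => Finset.mem_filter.mpr ⟨Finset.mem_univ _, hx⟩]
      refine (fm_card_filter_fin m (fun x => x < k)).trans ?_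
      rw [show (Finset.Iio m).filter (fun x => x < k) = Finset.Iio k by
        ext x; simp only [Finset.mem_filter, Finset.mem_Iio]; omega, Nat.card_Iio]
    have cSA : ((Finset.univ.filter (fun c : Fin m =>
          (c : ℕ) < k - k₂ ∨ (k ≤ (c : ℕ) ∧ (c : ℕ) < k + k₂))) ∩
        Finset.univ.filter (fun c : Fin m => (((Equiv.refl (Fin m)) c : ℕ) < k))).card
        = k - k₂ := by
      rw [show ((Finset.univ.filter (fun c : Fin m =>
          (c : ℕ) < k - k₂ ∨ (k ≤ (c : ℕ) ∧ (c : ℕ) < k + k₂))) ∩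
          Finset.univ.filter (fun c : Fin m => (((Equiv.refl (Fin m)) c : ℕ) < k)))
          = Finset.univ.filter (fun c : Fin m =>
            ((c : ℕ) < k - k₂ ∨ (k ≤ (c : ℕ) ∧ (c : ℕ) < k + k₂)) ∧ (c : ℕ) < k) by
        ext x; simp only [Finset.mem_inter, Finset.mem_filter, Finset.mem_univ, true_and,
          Equiv.refl_apply]; try tauto
        exact and_congr_right' ⟨fun h => (Finset.mem_filter.mp h).2, fun h => Finset.mem_filter.mpr ⟨Finset.mem_univ _, h⟩⟩]
      refine (fm_card_filter_fin m (fun x => (x < k - k₂ ∨ (k ≤ x ∧ x < k + k₂)) ∧ x < k)).trans ?_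
      rw [show (Finset.Iio m).filter
          (fun x => (x < k - k₂ ∨ (k ≤ x ∧ x < k + k₂)) ∧ x < k) = Finset.Iio (k - k₂) by
        ext x; simp only [Finset.mem_filter, Finset.mem_Iio]; omega, Nat.card_Iio]
    have cMB : ((Finset.univ.filter (fun c : Fin m => (c : ℕ) < k)) ∩
        Finset.univ.filter (fun c : Fin m => ((vB c : ℕ) < k))).card = k₁ := by
      rw [show ((Finset.univ.filter (fun c : Fin m => (c : ℕ) < k)) ∩
          Finset.univ.filter (fun c : Fin m => ((vB c : ℕ) < k)))
          = Finset.univ.filter (fun c : Fin m => (c : ℕ) < k ∧ fm_f k k₁ c.val < k) by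
        ext x; simp only [Finset.mem_inter, Finset.mem_filter, Finset.mem_univ, true_and,
          hvB_apply]]
      refine (fm_card_filter_fin m (fun x => x < k ∧ fm_f k k₁ x < k)).trans ?_
      rw [show (Finset.Iio m).filter (fun x => x < k ∧ fm_f k k₁ x < k) = Finset.Iio k₁ by
        ext x
        rw [Finset.mem_filter]
        simp only [Finset.mem_filter, Finset.mem_Iio, fm_f]
        split_ifs <;> omega, Nat.card_Iio]
    have cSB : ((Finset.univ.filter (fun c : Fin m =>
          (c : ℕ) < k - k₂ ∨ (k ≤ (c : ℕ) ∧ (c : ℕ) < k + k₂))) ∩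
        Finset.univ.filter (fun c : Fin m => ((vB c : ℕ) < k))).card = k₁ + k₂ := by
      rw [show ((Finset.univ.filter (fun c : Fin m =>
          (c : ℕ) < k - k₂ ∨ (k ≤ (c : ℕ) ∧ (c : ℕ) < k + k₂))) ∩
          Finset.univ.filter (fun c : Fin m => ((vB c : ℕ) < k)))
          = Finset.univ.filter (fun c : Fin m =>
            ((c : ℕ) < k - k₂ ∨ (k ≤ (c : ℕ) ∧ (c : ℕ) < k + k₂)) ∧ fm_f k k₁ c.val < k) by
        ext x; simp only [Finset.mem_inter, Finset.mem_filter, Finset.mem_univ, true_and,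
          hvB_apply]]
      refine (fm_card_filter_fin m
        (fun x => (x < k - k₂ ∨ (k ≤ x ∧ x < k + k₂)) ∧ fm_f k k₁ x < k)).trans ?_
      rw [show (Finset.Iio m).filter
          (fun x => (x < k - k₂ ∨ (k ≤ x ∧ x < k + k₂)) ∧ fm_f k k₁ x < k)
          = Finset.Iio k₁ ∪ Finset.Ico k (k + k₂) by
        ext x
        rw [Finset.mem_filter]
        simp only [Finset.mem_filter, Finset.mem_Iio, Finset.mem_union, Finset.mem_Ico, fm_f]
        split_ifs <;> omega]
      rw [Finset.card_union_of_disjoint, Nat.card_Iio, Nat.card_Ico]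
      · omega
      · simp only [Finset.disjoint_left, Finset.mem_Iio, Finset.mem_Ico]
        intro x hx; omega
    rw [cMA, cSA, cMB, cSB]
    -- final arithmetic
    have h1 : g k ≤ g (k - k₂) + d1 := by omega
    have h2 : g k₁ + d1 + 1 ≤ g (k₁ + k₂) := by omega
    calc (d1 + 1) * g k + d1 * g k₁
        ≤ (d1 + 1) * (g (k - k₂) + d1) + d1 * g k₁ := by
          gcongr
      _ ≤ (d1 + 1) * g (k - k₂) + d1 * (g k₁ + d1 + 1) := by ring_nf; omega
      _ ≤ (d1 + 1) * g (k - k₂) + d1 * g (k₁ + k₂) := by gcongr
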